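/- Let w ∈ ℝ³ with |w| ≥ 1 and consider U = (0, 0, w) ∈ ℝ^{3×3} (rows m, u, w). Then with U₊ = (w, w, w), U₋ = (-w, -w, w), U₁ = ((1+3√(2/3))w, w, (1+3√(2/3))² w), U₂ = (-3(1+√(2/3))w, -3w, -3(1+√(2/3))² w), one has: U = ½U₋ + ½U₊, U₋ = ½U₁ + ½U₂, the differences U₊ - U₋, U₂ - U₁ each have rank at most 2, and each of U₊, U₁, U₂ lies in the constitutive set K_C = {(ρv, v, ρ²v) : 1/C ≤ |v| ≤ C, 1/C ≤ ρ ≤ C} for sufficiently large C > 1 depending only on |w|. -/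
import Mathlib

open Matrix

def rowsMat (m u w : Fin 3 → ℝ) : Matrix (Fin 3) (Fin 3) ℝ := Matrix.of ![m, u, w]

noncomputable def enorm3 (v : Fin 3 → ℝ) : ℝ := Real.sqrt (∑ i, (v i) ^ 2)

def Kset (C : ℝ) : Set (Matrix (Fin 3) (Fin 3) ℝ) :=
  {A | ∃ (ρ : ℝ) (v : Fin 3 → ℝ), 1 / C ≤ ρ ∧ ρ ≤ C ∧ 1 / C ≤ enorm3 v ∧ enorm3 v ≤ C ∧
    A = rowsMat (ρ • v) v ((ρ ^ 2) • v)}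

lemma rank_outer_le (a : Fin 3 → ℝ) (v : Fin 3 → ℝ) :
    (Matrix.of (fun i j => a i * v j) : Matrix (Fin 3) (Fin 3) ℝ).rank ≤ 2 := by
  have h : (Matrix.of (fun i j => a i * v j) : Matrix (Fin 3) (Fin 3) ℝ) =
      (Matrix.of (fun i (_ : Fin 1) => a i)) * (Matrix.of (fun (_ : Fin 1) j => v j)) := by
    ext i j; simp [Matrix.mul_apply]
  rw [h]
  calc _ ≤ (Matrix.of (fun i (_ : Fin 1) => a i) : Matrix (Fin 3) (Fin 1) ℝ).rank :=
        Matrix.rank_mul_le_left _ _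
    _ ≤ Fintype.card (Fin 1) := Matrix.rank_le_card_width _
    _ ≤ 2 := by simp

theorem stmt15 (w : Fin 3 → ℝ) (hw : 1 ≤ enorm3 w) :
    let s : ℝ := Real.sqrt (2 / 3)
    let U : Matrix (Fin 3) (Fin 3) ℝ := rowsMat 0 0 w
    let Uplus := rowsMat w w w
    let Uminus := rowsMat (-w) (-w) w
    let U₁ := rowsMat ((1 + 3 * s) • w) w (((1 + 3 * s) ^ 2) • w)
    let U₂ := rowsMat ((-3 * (1 + s)) • w) (((-3 : ℝ)) • w) ((-3 * (1 + s) ^ 2) • w)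
    U = (1 / 2 : ℝ) • Uminus + (1 / 2 : ℝ) • Uplus ∧
    Uminus = (1 / 2 : ℝ) • U₁ + (1 / 2 : ℝ) • U₂ ∧
    (Uplus - Uminus).rank ≤ 2 ∧ (U₂ - U₁).rank ≤ 2 ∧
    ∃ C : ℝ, 1 < C ∧ Uplus ∈ Kset C ∧ U₁ ∈ Kset C ∧ U₂ ∈ Kset C := by
  intro s U Uplus Uminus U₁ U₂
  have hs0 : 0 ≤ s := Real.sqrt_nonneg _
  have hs2 : s ^ 2 = 2 / 3 := Real.sq_sqrt (by norm_num)
  have hs1 : s ≤ 1 := by nlinarith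
  refine ⟨?_, ?_, ?_, ?_, ?_⟩
  · ext i j
    fin_cases i <;>
      simp [U, Uplus, Uminus, rowsMat, Matrix.vecHead, Matrix.vecTail] <;> ring
  · ext i j
    fin_cases i <;>
        simp [Uminus, U₁, U₂, rowsMat, Matrix.vecHead, Matrix.vecTail]
    · ring
    · ring
    · linear_combination (-3 * w j) * hs2
  · have h : Uplus - Uminus = Matrix.of (fun i j => (![2, 2, 0] : Fin 3 → ℝ) i * w j) := by
      ext i j
      fin_cases i <;>
        simp [Uplus, Uminus, rowsMat, Matrix.vecHead, Matrix.vecTail] <;> ring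
    rw [h]; exact rank_outer_le _ _
  · have h : U₂ - U₁ = Matrix.of
        (fun i j => (![-4 - 6 * s, -4, -12 - 12 * s] : Fin 3 → ℝ) i * w j) := by
      ext i j
      fin_cases i <;>
          simp [U₁, U₂, rowsMat, Matrix.vecHead, Matrix.vecTail]
      · linear_combination (0 : ℝ) * hs2
      · linear_combination (0 : ℝ) * hs2
      · linear_combination (-12 * w j) * hs2
    rw [h]; exact rank_outer_le _ _
  · refine ⟨3 * enorm3 w + 10, by nlinarith, ?_, ?_, ?_⟩
    · refine ⟨1, w, ?_, ?_, ?_, ?_, ?_⟩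
      · rw [div_le_one (by nlinarith)]; nlinarith
      · nlinarith
      · calc 1 / (3 * enorm3 w + 10) ≤ 1 := by rw [div_le_one (by nlinarith)]; nlinarith
          _ ≤ enorm3 w := hw
      · nlinarith
      · ext i j
        fin_cases i <;> simp [Uplus, rowsMat, Matrix.vecHead, Matrix.vecTail]
    · refine ⟨1 + 3 * s, w, ?_, ?_, ?_, ?_, ?_⟩
      · calc 1 / (3 * enorm3 w + 10) ≤ 1 := by rw [div_le_one (by nlinarith)]; nlinarith
          _ ≤ 1 + 3 * s := by nlinarith
      · nlinarith
      · calc 1 / (3 * enorm3 w + 10) ≤ 1 := by rw [div_le_one (by nlinarith)]; nlinarith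
          _ ≤ enorm3 w := hw
      · nlinarith
      · rfl
    · have hnorm : enorm3 ((-3 : ℝ) • w) = 3 * enorm3 w := by
        unfold enorm3
        have : ∑ i, (((-3 : ℝ) • w) i) ^ 2 = 9 * ∑ i, (w i) ^ 2 := by
          simp [Fin.sum_univ_three]; ring
        rw [this, Real.sqrt_mul (by norm_num)]
        rw [show (9 : ℝ) = 3 ^ 2 by norm_num, Real.sqrt_sq (by norm_num)]
      refine ⟨1 + s, (-3 : ℝ) • w, ?_, ?_, ?_, ?_, ?_⟩
      · calc 1 / (3 * enorm3 w + 10) ≤ 1 := by rw [div_le_one (by nlinarith)]; nlinarith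
          _ ≤ 1 + s := by nlinarith
      · nlinarith
      · rw [hnorm]
        calc 1 / (3 * enorm3 w + 10) ≤ 1 := by rw [div_le_one (by nlinarith)]; nlinarith
          _ ≤ 3 * enorm3 w := by nlinarith
      · rw [hnorm]; nlinarith
      · ext i j
        fin_cases i <;>
          simp [U₂, rowsMat, Matrix.vecHead, Matrix.vecTail] <;> ring
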